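/- Let A have restricted isometry constants δ_q with 0 < δ_{2k} and δ_{3k} ≤ 1/9. Let x^p ∈ ℝⁿ be k-sparse, u^p = x^p + Aᵀ(y − A x^p), let w^(1), w^(2), w^(3) ∈ P^k be successive compression minimizers at x^p, and let x^# = H_k(u^p ⊗ w^(1) ⊗ w^(2) ⊗ w^(3)). Suppose x^{p+1} satisfies supp(x^{p+1}) ⊆ supp(x^#) and [Aᵀ(y − A x^{p+1})]_{supp(x^#)} = 0 (the ROTP3 iterate). Then ‖x^{p+1} − x_S‖₂ ≤ ρ''·‖x^p − x_S‖₂ + γ̂₁·‖Aᵀν'‖₂ + γ̂₂·‖ν'‖₂, where ρ'' = (1/√(1−δ_{2k}²))·[(δ_{2k} + 6δ_{3k})·√((1+δ_k)/(1−δ_{2k})) + δ_{3k}] < 1, γ̂₁ = (1/√(1−δ_{2k}²))·[1 + (5(δ_{2k}+6δ_{3k})/(δ_{2k}+4δ_{3k}))·√((1+δ_k)/(1−δ_{2k}))], and γ̂₂ = (1/√(1−δ_{2k}²))·[2(δ_{2k}+6δ_{3k})/((δ_{2k}+4δ_{3k})·√(1−δ_{2k})) + 1/(1−δ_{2k})].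 -/

import Mathlib

open Finset

noncomputable def nsq {ι : Type*} [Fintype ι] (x : ι → ℝ) : ℝ := ∑ i, (x i) ^ 2

noncomputable def n2 {ι : Type*} [Fintype ι] (x : ι → ℝ) : ℝ := Real.sqrt (nsq x)

noncomputable def supp {n : ℕ} (x : Fin n → ℝ) : Finset (Fin n) :=
  Finset.univ.filter (fun i => x i ≠ 0)

def Sparse {n : ℕ} (k : ℕ) (x : Fin n → ℝ) : Prop := (supp x).card ≤ k

def restr {n : ℕ} (x : Fin n → ℝ) (T : Finset (Fin n)) : Fin n → ℝ :=
  fun i => if i ∈ T then x i else 0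

def SatRIP {m n : ℕ} (A : Matrix (Fin m) (Fin n) ℝ) (q : ℕ) (δ : ℝ) : Prop :=
  ∀ z : Fin n → ℝ, Sparse q z →
    (1 - δ) * nsq z ≤ nsq (A.mulVec z) ∧ nsq (A.mulVec z) ≤ (1 + δ) * nsq z

/-- `δ` is the `q`-th order restricted isometry constant of `A`:
the smallest `δ' ≥ 0` such that `(1-δ')‖z‖² ≤ ‖Az‖² ≤ (1+δ')‖z‖²` for all `q`-sparse `z`. -/
def IsRIC {m n : ℕ} (A : Matrix (Fin m) (Fin n) ℝ) (q : ℕ) (δ : ℝ) : Prop :=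
  IsLeast {δ' : ℝ | 0 ≤ δ' ∧ SatRIP A q δ'} δ

/-- membership in `W^k`: binary vectors with exactly `k` entries equal to 1. -/
def InW {n : ℕ} (k : ℕ) (w : Fin n → ℝ) : Prop :=
  (∀ i, w i = 0 ∨ w i = 1) ∧ (Finset.univ.filter (fun i => w i = 1)).card = k

/-- membership in the polytope `P^k`. -/
def InP {n : ℕ} (k : ℕ) (w : Fin n → ℝ) : Prop :=
  (∑ i, w i) = (k : ℝ) ∧ ∀ i, 0 ≤ w i ∧ w i ≤ 1

/-- `S` is an index set of the `k` largest absolute entries of `x`. -/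
def IsTopK {n : ℕ} (x : Fin n → ℝ) (k : ℕ) (S : Finset (Fin n)) : Prop :=
  S.card = k ∧ ∀ i ∈ S, ∀ j ∉ S, |x j| ≤ |x i|

/-- `d` is a hard thresholding `H_k(z)` of `z`. -/
def IsHT {n : ℕ} (k : ℕ) (z d : Fin n → ℝ) : Prop :=
  Sparse k d ∧ ∀ d' : Fin n → ℝ, Sparse k d' → n2 (z - d) ≤ n2 (z - d')

/-- `w 0, …, w (ω-1)` are successive compression minimizers at `x^p` (with `u^p = up`). -/
def SCM {m n : ℕ} (A : Matrix (Fin m) (Fin n) ℝ) (y : Fin m → ℝ) (k ω : ℕ)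
    (up : Fin n → ℝ) (w : ℕ → Fin n → ℝ) : Prop :=
  ∀ j < ω, InP k (w j) ∧ ∀ v : Fin n → ℝ, InP k v →
    n2 (y - A.mulVec (up * (∏ l ∈ Finset.range j, w l) * w j)) ≤
    n2 (y - A.mulVec (up * (∏ l ∈ Finset.range j, w l) * v))

/-- the `ℓ∞` norm of `x` restricted to `T` (zero if `T` is empty). -/
noncomputable def linfT {n : ℕ} (x : Fin n → ℝ) (T : Finset (Fin n)) : ℝ :=
  if h : T.Nonempty then T.sup' h (fun j => |x j|) else 0

open Matrix

section Infra
variable {n m : ℕ}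

lemma nsq_nonneg (x : Fin n → ℝ) : 0 ≤ nsq x :=
  Finset.sum_nonneg (fun i _ => sq_nonneg _)

lemma n2_nonneg (x : Fin n → ℝ) : 0 ≤ n2 x := Real.sqrt_nonneg _

lemma n2_sq (x : Fin n → ℝ) : n2 x ^ 2 = nsq x := Real.sq_sqrt (nsq_nonneg x)

lemma n2_mono {x y : Fin n → ℝ} (h : nsq x ≤ nsq y) : n2 x ≤ n2 y :=
  Real.sqrt_le_sqrt h

lemma nsq_eq_dot (x : Fin n → ℝ) : nsq x = x ⬝ᵥ x := by
  simp [nsq, dotProduct, sq]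

-- transfer to Euclidean space
lemma n2_eq_norm (x : Fin n → ℝ) :
    n2 x = ‖(WithLp.equiv 2 (Fin n → ℝ)).symm x‖ := by
  have h : ∀ i, ‖(WithLp.equiv 2 (Fin n → ℝ)).symm x i‖ ^ 2 = x i ^ 2 :=
    fun i => by rw [Real.norm_eq_abs, sq_abs]; rfl
  simp only [n2, nsq, EuclideanSpace.norm_eq, h]

lemma n2_add_le (x y : Fin n → ℝ) : n2 (x + y) ≤ n2 x + n2 y := by
  rw [n2_eq_norm, n2_eq_norm, n2_eq_norm]
  rw [show (WithLp.equiv 2 (Fin n → ℝ)).symm (x + y)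
      = (WithLp.equiv 2 (Fin n → ℝ)).symm x + (WithLp.equiv 2 (Fin n → ℝ)).symm y from rfl]
  exact norm_add_le _ _

lemma n2_neg (x : Fin n → ℝ) : n2 (-x) = n2 x := by
  unfold n2 nsq; congr 1; apply Finset.sum_congr rfl; intros; simp

lemma n2_sub_comm (x y : Fin n → ℝ) : n2 (x - y) = n2 (y - x) := by
  rw [← n2_neg (x - y)]; congr 1; abel

lemma n2_smul (c : ℝ) (hc : 0 ≤ c) (x : Fin n → ℝ) : n2 (c • x) = c * n2 x := by
  unfold n2 nsq
  rw [show ∑ i, (c • x) i ^ 2 = c ^ 2 * ∑ i, x i ^ 2 by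
    rw [Finset.mul_sum]; apply Finset.sum_congr rfl; intros; simp [mul_pow]]
  rw [Real.sqrt_mul (sq_nonneg c), Real.sqrt_sq hc]

lemma abs_dot_le (x y : Fin n → ℝ) : |x ⬝ᵥ y| ≤ n2 x * n2 y := by
  rw [n2_eq_norm, n2_eq_norm]
  have := abs_real_inner_le_norm ((WithLp.equiv 2 (Fin n → ℝ)).symm x)
    ((WithLp.equiv 2 (Fin n → ℝ)).symm y)
  rw [show (inner ℝ ((WithLp.equiv 2 (Fin n → ℝ)).symm x)
      ((WithLp.equiv 2 (Fin n → ℝ)).symm y) : ℝ) = x ⬝ᵥ y from ?_] at this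
  · exact this
  · rw [PiLp.inner_apply]
    simp only [RCLike.inner_apply, conj_trivial]
    rw [dotProduct]; exact Finset.sum_congr rfl (fun i _ => mul_comm _ _)

end Infra

section Restr
variable {n m : ℕ}

lemma restr_apply (x : Fin n → ℝ) (T : Finset (Fin n)) (i : Fin n) :
    restr x T i = if i ∈ T then x i else 0 := rfl

lemma supp_restr (x : Fin n → ℝ) (T : Finset (Fin n)) : supp (restr x T) ⊆ T := by
  intro i hi
  simp only [supp, Finset.mem_filter] at hi
  by_contra h
  exact hi.2 (by simp [restr, h])

lemma sparse_restr {k : ℕ} (x : Fin n → ℝ) {T : Finset (Fin n)} (h : T.card ≤ k) :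
    Sparse k (restr x T) :=
  le_trans (Finset.card_le_card (supp_restr x T)) h

lemma restr_eq_self_of_supp {x : Fin n → ℝ} {T : Finset (Fin n)} (h : supp x ⊆ T) :
    restr x T = x := by
  funext i
  simp only [restr]
  by_cases hi : i ∈ T
  · simp [hi]
  · have hx : x i = 0 := by
      by_contra hx
      exact hi (h (by simpa [supp] using hx))
    simp [hi, hx]

lemma mem_supp {x : Fin n → ℝ} {i : Fin n} : i ∈ supp x ↔ x i ≠ 0 := by
  simp [supp]

lemma restr_eq_zero_of_not_mem {x : Fin n → ℝ} {T : Finset (Fin n)} {i : Fin n}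
    (h : i ∉ T) : restr x T i = 0 := by simp [restr, h]

lemma restr_add (x y : Fin n → ℝ) (T : Finset (Fin n)) :
    restr (x + y) T = restr x T + restr y T := by
  funext i; simp only [restr, Pi.add_apply]; split <;> simp

lemma restr_sub (x y : Fin n → ℝ) (T : Finset (Fin n)) :
    restr (x - y) T = restr x T - restr y T := by
  funext i; simp only [restr, Pi.sub_apply]; split <;> simp

lemma restr_neg (x : Fin n → ℝ) (T : Finset (Fin n)) :
    restr (-x) T = - restr x T := by
  funext i; simp only [restr, Pi.neg_apply]; split <;> simp

lemma restr_mul_right (x y : Fin n → ℝ) (T : Finset (Fin n)) :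
    restr (x * y) T = restr x T * y := by
  funext i; simp only [restr, Pi.mul_apply]; split <;> simp

lemma restr_restr (x : Fin n → ℝ) (T U : Finset (Fin n)) :
    restr (restr x T) U = restr x (T ∩ U) := by
  funext i; simp only [restr, Finset.mem_inter]
  by_cases hT : i ∈ T <;> by_cases hU : i ∈ U <;> simp [hT, hU]

lemma nsq_restr (x : Fin n → ℝ) (T : Finset (Fin n)) :
    nsq (restr x T) = ∑ i ∈ T, x i ^ 2 := by
  unfold nsq
  rw [← Finset.sum_subset (Finset.subset_univ T)]
  · apply Finset.sum_congr rfl; intro i hi; simp [restr, hi]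
  · intro i _ hi; simp [restr, hi]

lemma nsq_split (x : Fin n → ℝ) (T : Finset (Fin n)) :
    nsq x = nsq (restr x T) + nsq (restr x Tᶜ) := by
  rw [nsq_restr, nsq_restr]
  unfold nsq
  rw [← Finset.sum_add_sum_compl T (fun i => x i ^ 2)]

lemma restr_add_restr_compl (x : Fin n → ℝ) (T : Finset (Fin n)) :
    restr x T + restr x Tᶜ = x := by
  funext i
  by_cases hi : i ∈ T <;> simp [restr, hi]

lemma nsq_restr_mono {T U : Finset (Fin n)} (h : T ⊆ U) (x : Fin n → ℝ) :
    nsq (restr x T) ≤ nsq (restr x U) := by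
  rw [nsq_restr, nsq_restr]
  exact Finset.sum_le_sum_of_subset_of_nonneg h (fun i _ _ => sq_nonneg _)

lemma n2_restr_le (x : Fin n → ℝ) (T : Finset (Fin n)) : n2 (restr x T) ≤ n2 x := by
  apply n2_mono
  rw [nsq_restr]
  unfold nsq
  exact Finset.sum_le_sum_of_subset_of_nonneg (Finset.subset_univ T) (fun i _ _ => sq_nonneg _)

lemma n2_restr_mono {T U : Finset (Fin n)} (h : T ⊆ U) (x : Fin n → ℝ) :
    n2 (restr x T) ≤ n2 (restr x U) := n2_mono (nsq_restr_mono h x)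

lemma dot_restr (g h : Fin n → ℝ) (T : Finset (Fin n)) :
    g ⬝ᵥ (restr h T) = (restr g T) ⬝ᵥ (restr h T) := by
  unfold dotProduct
  apply Finset.sum_congr rfl
  intro i _
  by_cases hi : i ∈ T <;> simp [restr, hi]

lemma nsq_restr_eq_dot (h : Fin n → ℝ) (T : Finset (Fin n)) :
    h ⬝ᵥ (restr h T) = nsq (restr h T) := by
  rw [dot_restr, nsq_eq_dot]

end Restr

section RIP
variable {m n : ℕ}

lemma supp_add_subset (x y : Fin n → ℝ) : supp (x + y) ⊆ supp x ∪ supp y := by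
  intro i hi
  rw [mem_supp] at hi
  rw [Finset.mem_union, mem_supp, mem_supp]
  by_contra h
  push_neg at h
  exact hi (by simp [h.1, h.2])

lemma supp_sub_subset (x y : Fin n → ℝ) : supp (x - y) ⊆ supp x ∪ supp y := by
  intro i hi
  rw [mem_supp] at hi
  rw [Finset.mem_union, mem_supp, mem_supp]
  by_contra h
  push_neg at h
  exact hi (by simp [Pi.sub_apply, h.1, h.2])

lemma supp_smul_subset (c : ℝ) (x : Fin n → ℝ) : supp (c • x) ⊆ supp x := by
  intro i hi
  rw [mem_supp] at hi ⊢
  intro h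
  exact hi (by simp [h])

lemma sparse_mono {q q' : ℕ} (h : q ≤ q') {x : Fin n → ℝ} (hx : Sparse q x) :
    Sparse q' x := le_trans hx h

lemma satRIP_mono {A : Matrix (Fin m) (Fin n) ℝ} {q q' : ℕ} {δ : ℝ}
    (h : q' ≤ q) (hA : SatRIP A q δ) : SatRIP A q' δ :=
  fun z hz => hA z (sparse_mono h hz)

lemma ric_le {A : Matrix (Fin m) (Fin n) ℝ} {q q' : ℕ} {δ δ' : ℝ}
    (hδ : IsRIC A q δ) (hδ' : IsRIC A q' δ') (h : q ≤ q') : δ ≤ δ' :=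
  hδ.2 ⟨hδ'.1.1, satRIP_mono h hδ'.1.2⟩

lemma ric_nonneg {A : Matrix (Fin m) (Fin n) ℝ} {q : ℕ} {δ : ℝ} (hδ : IsRIC A q δ) :
    0 ≤ δ := hδ.1.1

/-- upper RIP in `n2` form -/
lemma rip_upper {A : Matrix (Fin m) (Fin n) ℝ} {q : ℕ} {δ : ℝ} (hδ : 0 ≤ δ)
    (hA : SatRIP A q δ) {z : Fin n → ℝ} (hz : Sparse q z) :
    n2 (A.mulVec z) ≤ Real.sqrt (1 + δ) * n2 z := by
  have h := (hA z hz).2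
  unfold n2
  rw [← Real.sqrt_mul (by linarith : (0:ℝ) ≤ 1 + δ)]
  exact Real.sqrt_le_sqrt h

/-- lower RIP in `n2` form -/
lemma rip_lower {A : Matrix (Fin m) (Fin n) ℝ} {q : ℕ} {δ : ℝ} (hδ : δ < 1)
    (hA : SatRIP A q δ) {z : Fin n → ℝ} (hz : Sparse q z) :
    n2 z ≤ n2 (A.mulVec z) / Real.sqrt (1 - δ) := by
  have h := (hA z hz).1
  have h1 : (0:ℝ) < 1 - δ := by linarith
  rw [le_div_iff₀ (Real.sqrt_pos.mpr h1)]
  unfold n2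
  rw [← Real.sqrt_mul (nsq_nonneg z), mul_comm (nsq z)]
  exact Real.sqrt_le_sqrt h

/-- adjoint identity -/
lemma dot_mulVec_transpose (A : Matrix (Fin m) (Fin n) ℝ) (u : Fin n → ℝ) (v : Fin m → ℝ) :
    (A.mulVec u) ⬝ᵥ v = u ⬝ᵥ (A.transpose.mulVec v) := by
  rw [dotProduct_comm, Matrix.dotProduct_mulVec, dotProduct_comm]
  congr 1
  exact (Matrix.mulVec_transpose A v).symm

lemma nsq_pos_of_ne_zero {x : Fin n → ℝ} (hx : x ≠ 0) : 0 < nsq x := by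
  rcases Function.ne_iff.mp hx with ⟨i, hi⟩
  have habs : (0:ℝ) < |x i| := abs_pos.mpr hi
  have : (0:ℝ) < x i ^ 2 := by rw [← sq_abs]; positivity
  calc (0:ℝ) < x i ^ 2 := this
    _ ≤ nsq x := Finset.single_le_sum (fun j _ => sq_nonneg (x j)) (Finset.mem_univ i)

lemma n2_pos_of_ne_zero {x : Fin n → ℝ} (hx : x ≠ 0) : 0 < n2 x :=
  Real.sqrt_pos.mpr (nsq_pos_of_ne_zero hx)

end RIP

section Polar
variable {m n : ℕ}

lemma nsq_add_expand (u v : Fin n → ℝ) :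
    nsq (u + v) = nsq u + 2 * (u ⬝ᵥ v) + nsq v := by
  simp only [nsq_eq_dot, add_dotProduct, dotProduct_add]
  rw [dotProduct_comm v u]
  ring

lemma nsq_sub_expand (u v : Fin n → ℝ) :
    nsq (u - v) = nsq u - 2 * (u ⬝ᵥ v) + nsq v := by
  simp only [nsq_eq_dot, sub_dotProduct, dotProduct_sub]
  rw [dotProduct_comm v u]
  ring

/-- unscaled polarization bound -/
lemma rip_bilinear_aux {A : Matrix (Fin m) (Fin n) ℝ} {q : ℕ} {δ : ℝ}
    (hA : SatRIP A q δ) {u v : Fin n → ℝ}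
    (hs : (supp u ∪ supp v).card ≤ q) :
    |(A.mulVec u) ⬝ᵥ (A.mulVec v) - u ⬝ᵥ v| ≤ δ / 2 * (nsq u + nsq v) := by
  have hsum : Sparse q (u + v) :=
    le_trans (Finset.card_le_card (supp_add_subset u v)) hs
  have hdiff : Sparse q (u - v) :=
    le_trans (Finset.card_le_card (supp_sub_subset u v)) hs
  have h1 := hA _ hsum
  have h2 := hA _ hdiff
  rw [Matrix.mulVec_add] at h1
  rw [Matrix.mulVec_sub] at h2
  have e1 := nsq_add_expand (A.mulVec u) (A.mulVec v)
  have e2 := nsq_sub_expand (A.mulVec u) (A.mulVec v)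
  have e3 := nsq_add_expand u v
  have e4 := nsq_sub_expand u v
  rw [e1, e3] at h1
  rw [e2, e4] at h2
  rw [abs_le]
  constructor <;> nlinarith [nsq_nonneg u, nsq_nonneg v, nsq_nonneg (u+v), nsq_nonneg (u-v), e3, e4, h1.1, h1.2, h2.1, h2.2]

/-- polarization bound -/
lemma rip_bilinear {A : Matrix (Fin m) (Fin n) ℝ} {q : ℕ} {δ : ℝ}
    (hA : SatRIP A q δ) (hδ : 0 ≤ δ) {u v : Fin n → ℝ}
    (hs : (supp u ∪ supp v).card ≤ q) :
    |(A.mulVec u) ⬝ᵥ (A.mulVec v) - u ⬝ᵥ v| ≤ δ * n2 u * n2 v := by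
  by_cases hu : u = 0
  · simp [hu, nsq_eq_dot, n2, nsq]
  by_cases hv : v = 0
  · simp [hv, nsq_eq_dot, n2, nsq]
  have hnu := n2_pos_of_ne_zero hu
  have hnv := n2_pos_of_ne_zero hv
  set t : ℝ := Real.sqrt (n2 v / n2 u) with ht
  have htpos : 0 < t := Real.sqrt_pos.mpr (by positivity)
  have hts : t ^ 2 = n2 v / n2 u := Real.sq_sqrt (by positivity)
  have hsupp' : (supp (t • u) ∪ supp (t⁻¹ • v)).card ≤ q := by
    refine le_trans (Finset.card_le_card ?_) hs
    exact Finset.union_subset_union (supp_smul_subset _ _) (supp_smul_subset _ _)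
  have key := rip_bilinear_aux hA hsupp'
  have hmv1 : A.mulVec (t • u) = t • A.mulVec u := by
    rw [Matrix.mulVec_smul]
  have hmv2 : A.mulVec (t⁻¹ • v) = t⁻¹ • A.mulVec v := by
    rw [Matrix.mulVec_smul]
  rw [hmv1, hmv2] at key
  have hdot1 : (t • A.mulVec u) ⬝ᵥ (t⁻¹ • A.mulVec v) = (A.mulVec u) ⬝ᵥ (A.mulVec v) := by
    rw [smul_dotProduct, dotProduct_smul]
    rw [smul_smul, mul_inv_cancel₀ (ne_of_gt htpos)]
    simp
  have hdot2 : (t • u) ⬝ᵥ (t⁻¹ • v) = u ⬝ᵥ v := by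
    rw [smul_dotProduct, dotProduct_smul]
    rw [smul_smul, mul_inv_cancel₀ (ne_of_gt htpos)]
    simp
  rw [hdot1, hdot2] at key
  have hnsq1 : nsq (t • u) = n2 u * n2 v := by
    rw [← n2_sq, n2_smul t (le_of_lt htpos), mul_pow, n2_sq, hts, ← n2_sq u]
    field_simp
  have hnsq2 : nsq (t⁻¹ • v) = n2 u * n2 v := by
    rw [← n2_sq, n2_smul t⁻¹ (by positivity), mul_pow, n2_sq]
    rw [inv_pow, hts, ← n2_sq v]
    field_simp
  rw [hnsq1, hnsq2] at key
  calc |(A.mulVec u) ⬝ᵥ (A.mulVec v) - u ⬝ᵥ v| ≤ δ / 2 * (n2 u * n2 v + n2 u * n2 v) := key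
    _ = δ * n2 u * n2 v := by ring

/-- restriction of `(I - AᵀA) e` -/
lemma rip_restr {A : Matrix (Fin m) (Fin n) ℝ} {q : ℕ} {δ : ℝ}
    (hA : SatRIP A q δ) (hδ : 0 ≤ δ) {e : Fin n → ℝ} {T : Finset (Fin n)}
    (hs : (T ∪ supp e).card ≤ q) :
    n2 (restr (e - A.transpose.mulVec (A.mulVec e)) T) ≤ δ * n2 e := by
  set v := restr (e - A.transpose.mulVec (A.mulVec e)) T with hv
  have hsupp : (supp e ∪ supp v).card ≤ q := by
    have hsub : supp e ∪ supp v ⊆ supp e ∪ T :=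
      Finset.union_subset_union (subset_refl _) (supp_restr _ _)
    refine le_trans (Finset.card_le_card hsub) ?_
    rw [Finset.union_comm]
    exact hs
  have key := rip_bilinear hA hδ (u := e) (v := v) hsupp
  have h2 : (A.mulVec e) ⬝ᵥ (A.mulVec v) = (A.transpose.mulVec (A.mulVec e)) ⬝ᵥ v := by
    rw [dotProduct_comm, dot_mulVec_transpose A v (A.mulVec e), dotProduct_comm]
  have hiden : e ⬝ᵥ v - (A.mulVec e) ⬝ᵥ (A.mulVec v) = nsq v := by
    rw [h2, ← sub_dotProduct, hv, nsq_restr_eq_dot]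
  have : |nsq v| ≤ δ * n2 e * n2 v := by
    rw [← hiden]
    rw [← abs_neg]
    convert key using 2
    ring
  rw [abs_of_nonneg (nsq_nonneg v)] at this
  rw [← n2_sq] at this
  by_cases h0 : n2 v = 0
  · rw [h0]; exact mul_nonneg hδ (n2_nonneg e)
  · have hpos : 0 < n2 v := lt_of_le_of_ne (n2_nonneg v) (Ne.symm h0)
    nlinarith
end Polar

section TopK
variable {n : ℕ}

/-- exchange argument: a maximizing `k`-subset dominates any `[0,1]`-weighting with mass `≤ k`. -/
lemma topk_bound {k : ℕ} (hk : 0 < k) (hkn : k ≤ n) (c Wv : Fin n → ℝ)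
    (hc : ∀ i, 0 ≤ c i) (hW0 : ∀ i, 0 ≤ Wv i) (hW1 : ∀ i, Wv i ≤ 1)
    (hsum : ∑ i, Wv i ≤ (k : ℝ)) :
    ∃ T : Finset (Fin n), T.card = k ∧ ∑ i, c i * Wv i ≤ ∑ i ∈ T, c i := by
  -- choose T maximizing ∑_T c among k-subsets
  have hne : (Finset.univ.powersetCard k (α := Fin n)).Nonempty := by
    obtain ⟨T, hT1, hT2⟩ := Finset.exists_subset_card_eq
      (show k ≤ (Finset.univ : Finset (Fin n)).card by simpa using hkn)
    exact ⟨T, Finset.mem_powersetCard.mpr ⟨hT1, hT2⟩⟩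
  obtain ⟨T, hTmem, hTmax⟩ := Finset.exists_max_image _ (fun T => ∑ i ∈ T, c i) hne
  rw [Finset.mem_powersetCard] at hTmem
  obtain ⟨-, hTcard⟩ := hTmem
  refine ⟨T, hTcard, ?_⟩
  have hTne : T.Nonempty := Finset.card_pos.mp (hTcard ▸ hk)
  obtain ⟨j₀, hj₀T, hj₀min⟩ := Finset.exists_min_image T c hTne
  -- swap property
  have hswap : ∀ i ∉ T, c i ≤ c j₀ := by
    intro i hiT
    have hins : insert i (T.erase j₀) ∈ Finset.univ.powersetCard k := by
      rw [Finset.mem_powersetCard]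
      refine ⟨Finset.subset_univ _, ?_⟩
      rw [Finset.card_insert_of_notMem (fun h => hiT (Finset.erase_subset _ _ h)),
        Finset.card_erase_of_mem hj₀T, hTcard]
      omega
    have := hTmax _ hins
    rw [Finset.sum_insert (fun h => hiT (Finset.erase_subset _ _ h)),
      Finset.sum_erase_eq_sub hj₀T] at this
    linarith
  -- main computation
  have hsplit : ∑ i, c i * Wv i = ∑ i ∈ T, c i * Wv i + ∑ i ∈ Tᶜ, c i * Wv i :=
    (Finset.sum_add_sum_compl T _).symm
  have hT0 : (0:ℝ) ≤ c j₀ := hc j₀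
  have step1 : ∑ i ∈ Tᶜ, c i * Wv i ≤ c j₀ * ∑ i ∈ Tᶜ, Wv i := by
    rw [Finset.mul_sum]
    apply Finset.sum_le_sum
    intro i hi
    have hiT : i ∉ T := by simpa using hi
    exact mul_le_mul_of_nonneg_right (hswap i hiT) (hW0 i)
  have step2 : ∑ i ∈ Tᶜ, Wv i ≤ (k : ℝ) - ∑ i ∈ T, Wv i := by
    have : ∑ i ∈ T, Wv i + ∑ i ∈ Tᶜ, Wv i = ∑ i, Wv i := Finset.sum_add_sum_compl T _
    linarith
  have step3 : c j₀ * ((k:ℝ) - ∑ i ∈ T, Wv i) = ∑ i ∈ T, c j₀ * (1 - Wv i) := by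
    rw [Finset.sum_congr rfl (fun i _ => mul_sub (c j₀) 1 (Wv i)),
      Finset.sum_sub_distrib, Finset.sum_const, hTcard, ← Finset.mul_sum]
    simp only [mul_one, nsmul_eq_mul]
    ring
  have step4 : ∑ i ∈ T, c j₀ * (1 - Wv i) ≤ ∑ i ∈ T, c i * (1 - Wv i) := by
    apply Finset.sum_le_sum
    intro i hi
    exact mul_le_mul_of_nonneg_right (hj₀min i hi) (by linarith [hW1 i])
  have final : ∑ i ∈ T, c i * Wv i + ∑ i ∈ T, c i * (1 - Wv i) = ∑ i ∈ T, c i := by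
    rw [← Finset.sum_add_distrib]
    apply Finset.sum_congr rfl
    intros; ring
  calc ∑ i, c i * Wv i
      = ∑ i ∈ T, c i * Wv i + ∑ i ∈ Tᶜ, c i * Wv i := hsplit
    _ ≤ ∑ i ∈ T, c i * Wv i + c j₀ * ∑ i ∈ Tᶜ, Wv i := by linarith
    _ ≤ ∑ i ∈ T, c i * Wv i + c j₀ * ((k:ℝ) - ∑ i ∈ T, Wv i) := by
        have := mul_le_mul_of_nonneg_left step2 hT0
        linarith
    _ = ∑ i ∈ T, c i * Wv i + ∑ i ∈ T, c j₀ * (1 - Wv i) := by rw [step3]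
    _ ≤ ∑ i ∈ T, c i * Wv i + ∑ i ∈ T, c i * (1 - Wv i) := by linarith
    _ = ∑ i ∈ T, c i := final

/-- ℓ₂ form: `‖z ⊗ W‖ ≤ ‖z_T‖` for some `k`-set `T`. -/
lemma topk_nsq_bound {k : ℕ} (hk : 0 < k) (hkn : k ≤ n) (z Wv : Fin n → ℝ)
    (hW0 : ∀ i, 0 ≤ Wv i) (hW1 : ∀ i, Wv i ≤ 1)
    (hsum : ∑ i, Wv i ≤ (k : ℝ)) :
    ∃ T : Finset (Fin n), T.card = k ∧ n2 (z * Wv) ≤ n2 (restr z T) := by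
  obtain ⟨T, hT, hle⟩ := topk_bound hk hkn (fun i => z i ^ 2) Wv (fun i => sq_nonneg _) hW0 hW1 hsum
  refine ⟨T, hT, n2_mono ?_⟩
  rw [nsq_restr]
  refine le_trans ?_ hle
  unfold nsq
  apply Finset.sum_le_sum
  intro i _
  have h0 := hW0 i
  have h1 := hW1 i
  have : (z i * Wv i) ^ 2 = z i ^ 2 * Wv i * Wv i := by ring
  rw [Pi.mul_apply, this]
  nlinarith [mul_nonneg (mul_nonneg (sq_nonneg (z i)) h0) (by linarith : (0:ℝ) ≤ 1 - Wv i)]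

end TopK

section Vertex
variable {m n : ℕ}

lemma n2_convex_comb (A : Matrix (Fin m) (Fin n) ℝ) (z P Q : Fin n → ℝ) (a b : ℝ)
    (ha : 0 ≤ a) (hb : 0 ≤ b) (hab : a + b = 1) :
    n2 (A.mulVec (z * (a • P + b • Q))) ≤
      max (n2 (A.mulVec (z * P))) (n2 (A.mulVec (z * Q))) := by
  have hz : z * (a • P + b • Q) = a • (z * P) + b • (z * Q) := by
    funext l
    simp only [Pi.mul_apply, Pi.add_apply, Pi.smul_apply, smul_eq_mul]
    ring
  rw [hz, Matrix.mulVec_add, Matrix.mulVec_smul, Matrix.mulVec_smul]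
  calc n2 (a • A.mulVec (z * P) + b • A.mulVec (z * Q))
      ≤ n2 (a • A.mulVec (z * P)) + n2 (b • A.mulVec (z * Q)) := by
        have := n2_add_le (a • A.mulVec (z * P)) (b • A.mulVec (z * Q))
        convert this using 3 <;> rfl
    _ = a * n2 (A.mulVec (z * P)) + b * n2 (A.mulVec (z * Q)) := by
        rw [n2_smul a ha, n2_smul b hb]
    _ ≤ a * max (n2 (A.mulVec (z * P))) (n2 (A.mulVec (z * Q)))
        + b * max (n2 (A.mulVec (z * P))) (n2 (A.mulVec (z * Q))) :=
        add_le_add (mul_le_mul_of_nonneg_left (le_max_left _ _) ha)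
          (mul_le_mul_of_nonneg_left (le_max_right _ _) hb)
    _ = max (n2 (A.mulVec (z * P))) (n2 (A.mulVec (z * Q))) := by
        rw [← add_mul, hab, one_mul]

lemma binary_repr (z Wv : Fin n → ℝ) (hbin : ∀ l, Wv l = 0 ∨ Wv l = 1) :
    z * Wv = restr z (Finset.univ.filter (fun l => Wv l = 1)) := by
  funext l
  rcases hbin l with h | h <;> simp [restr, h]

lemma binary_card {k : ℕ} (Wv : Fin n → ℝ) (hbin : ∀ l, Wv l = 0 ∨ Wv l = 1)
    (hsum : ∑ l, Wv l ≤ (k : ℝ)) :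
    (Finset.univ.filter (fun l => Wv l = 1)).card ≤ k := by
  set F1 := Finset.univ.filter (fun l => Wv l = 1) with hF1
  have hcount : ∑ l, Wv l = (F1.card : ℝ) := by
    rw [← Finset.sum_add_sum_compl F1 Wv]
    have h1 : ∑ l ∈ F1, Wv l = (F1.card : ℝ) := by
      rw [Finset.sum_congr rfl (fun l hl => (Finset.mem_filter.mp hl).2)]
      simp [hF1]
    have h2 : ∑ l ∈ F1ᶜ, Wv l = 0 := by
      apply Finset.sum_eq_zero
      intro l hl
      rcases hbin l with h | h
      · exact h
      · exfalso
        exact (Finset.mem_compl.mp hl) (Finset.mem_filter.mpr ⟨Finset.mem_univ l, h⟩)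
    rw [h1, h2, add_zero]
  rw [hcount] at hsum
  exact_mod_cast hsum

lemma sum_diff_pair {i j : Fin n} (hij : i ≠ j) (f g : Fin n → ℝ)
    (h : ∀ l, l ≠ i → l ≠ j → f l = g l) :
    ∑ l, f l = ∑ l, g l + (f i - g i) + (f j - g j) := by
  have key : ∑ l, (f l - g l) = ∑ l ∈ ({i, j} : Finset (Fin n)), (f l - g l) := by
    symm
    apply Finset.sum_subset (Finset.subset_univ _)
    intro l _ hl
    simp only [Finset.mem_insert, Finset.mem_singleton] at hl
    push_neg at hl
    rw [h l hl.1 hl.2, sub_self]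
  rw [Finset.sum_pair hij] at key
  rw [Finset.sum_sub_distrib] at key
  linarith [key]

end Vertex

section VertexMain
variable {m n : ℕ}

private noncomputable def fracSet (Wv : Fin n → ℝ) : Finset (Fin n) :=
  Finset.univ.filter (fun l => Wv l ≠ 0 ∧ Wv l ≠ 1)

private lemma mem_fracSet {Wv : Fin n → ℝ} {l : Fin n} :
    l ∈ fracSet Wv ↔ Wv l ≠ 0 ∧ Wv l ≠ 1 := by
  simp [fracSet]

open Classical in
private noncomputable def vmeas (k : ℕ) (Wv : Fin n → ℝ) : ℕ :=
  2 * (fracSet Wv).card + (if ∑ l, Wv l = (k : ℝ) then 0 else 1)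

private lemma vmeas_le (k : ℕ) (Wv : Fin n → ℝ) :
    vmeas k Wv ≤ 2 * (fracSet Wv).card + 1 := by
  unfold vmeas
  refine Nat.add_le_add_left ?_ _
  split <;> omega

lemma vertex_aux {k : ℕ} (hk : 0 < k) (hkn : k ≤ n) (A : Matrix (Fin m) (Fin n) ℝ)
    (z : Fin n → ℝ) :
    ∀ N : ℕ, ∀ Wv : Fin n → ℝ, (∀ i, 0 ≤ Wv i) → (∀ i, Wv i ≤ 1) →
      (∑ i, Wv i ≤ (k : ℝ)) → vmeas k Wv ≤ N →
      ∃ T : Finset (Fin n), T.card ≤ k ∧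
        n2 (A.mulVec (z * Wv)) ≤ n2 (A.mulVec (restr z T)) := by
  intro N
  induction N with
  | zero =>
    intro Wv hW0 hW1 hsum hmeas
    have hF : fracSet Wv = ∅ := by
      have : (fracSet Wv).card = 0 := by unfold vmeas at hmeas; omega
      exact Finset.card_eq_zero.mp this
    have hbin : ∀ l, Wv l = 0 ∨ Wv l = 1 := by
      intro l
      by_contra hcon
      push_neg at hcon
      have : l ∈ fracSet Wv := mem_fracSet.mpr hcon
      rw [hF] at this
      exact absurd this (Finset.notMem_empty l)
    exact ⟨_, binary_card Wv hbin hsum, le_of_eq (by rw [binary_repr z Wv hbin])⟩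
  | succ N ih =>
    intro Wv hW0 hW1 hsum hmeas
    by_cases hFe : fracSet Wv = ∅
    · have hbin : ∀ l, Wv l = 0 ∨ Wv l = 1 := by
        intro l
        by_contra hcon
        push_neg at hcon
        have : l ∈ fracSet Wv := mem_fracSet.mpr hcon
        rw [hFe] at this
        exact absurd this (Finset.notMem_empty l)
      exact ⟨_, binary_card Wv hbin hsum, le_of_eq (by rw [binary_repr z Wv hbin])⟩
    obtain ⟨i, hiF⟩ := Finset.nonempty_of_ne_empty hFe
    obtain ⟨hi0, hi1⟩ := mem_fracSet.mp hiF
    have hi0' : 0 < Wv i := lt_of_le_of_ne (hW0 i) (Ne.symm hi0)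
    have hi1' : Wv i < 1 := lt_of_le_of_ne (hW1 i) hi1
    by_cases hsk : ∑ l, Wv l = (k : ℝ)
    -- ===== Case A : sum = k, move mass between two fractional coordinates =====
    · have hmeas' : 2 * (fracSet Wv).card ≤ N + 1 := by
        unfold vmeas at hmeas; rw [if_pos hsk] at hmeas; omega
      -- find second fractional coordinate
      have hj : ∃ j ∈ fracSet Wv, j ≠ i := by
        by_contra hcon
        push_neg at hcon
        have hsub : fracSet Wv = {i} := by
          apply Finset.eq_singleton_iff_unique_mem.mpr
          exact ⟨hiF, fun j hjF => hcon j hjF⟩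
        -- all coordinates other than i are binary; sum can't be an integer
        have hbin : ∀ l, l ≠ i → (Wv l = 0 ∨ Wv l = 1) := by
          intro l hl
          by_contra hc
          push_neg at hc
          have : l ∈ fracSet Wv := mem_fracSet.mpr hc
          rw [hsub, Finset.mem_singleton] at this
          exact hl this
        -- Wv agrees with (restr-style) binary vector off i
        set W' : Fin n → ℝ := Function.update Wv i 0 with hW'
        have hbin' : ∀ l, W' l = 0 ∨ W' l = 1 := by
          intro l
          by_cases hl : l = i
          · left; rw [hl, hW']; simp
          · rw [hW', Function.update_of_ne hl]; exact hbin l hl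
        have hsum' : ∑ l, W' l = ∑ l, Wv l - Wv i := by
          rw [hW', Finset.sum_update_of_mem (Finset.mem_univ i)]
          rw [← Finset.add_sum_erase _ Wv (Finset.mem_univ i), Finset.erase_eq]
          ring
        set F1 := Finset.univ.filter (fun l => W' l = 1) with hF1
        have hcount : ∑ l, W' l = (F1.card : ℝ) := by
          rw [← Finset.sum_add_sum_compl F1 W']
          have h1 : ∑ l ∈ F1, W' l = (F1.card : ℝ) := by
            rw [Finset.sum_congr rfl (fun l hl => (Finset.mem_filter.mp hl).2)]
            simp [hF1]
          have h2 : ∑ l ∈ F1ᶜ, W' l = 0 := by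
            apply Finset.sum_eq_zero
            intro l hl
            rcases hbin' l with h | h
            · exact h
            · exact absurd (Finset.mem_filter.mpr ⟨Finset.mem_univ l, h⟩)
                (Finset.mem_compl.mp hl)
          rw [h1, h2, add_zero]
        have heq : (F1.card : ℝ) = (k : ℝ) - Wv i := by
          rw [← hcount, hsum', hsk]
        have h1 : (F1.card : ℝ) < (k : ℝ) := by linarith
        have h2 : (k : ℝ) < (F1.card : ℝ) + 1 := by linarith
        have h1' : F1.card < k := by exact_mod_cast h1
        have h2' : k < F1.card + 1 := by exact_mod_cast h2
        omega
      obtain ⟨j, hjF, hji⟩ := hj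
      obtain ⟨hj0, hj1⟩ := mem_fracSet.mp hjF
      have hj0' : 0 < Wv j := lt_of_le_of_ne (hW0 j) (Ne.symm hj0)
      have hj1' : Wv j < 1 := lt_of_le_of_ne (hW1 j) hj1
      set t := min (1 - Wv i) (Wv j) with ht
      set s := min (Wv i) (1 - Wv j) with hs
      have htpos : 0 < t := lt_min (by linarith) hj0'
      have hspos : 0 < s := lt_min hi0' (by linarith)
      set Wp : Fin n → ℝ := fun l => if l = i then Wv i + t else if l = j then Wv j - t else Wv l with hWp
      set Wm : Fin n → ℝ := fun l => if l = i then Wv i - s else if l = j then Wv j + s else Wv l with hWm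
      have hij : i ≠ j := fun h => hji h.symm
      have hWpi : Wp i = Wv i + t := by simp [hWp]
      have hWpj : Wp j = Wv j - t := by simp [hWp, hji]
      have hWmi : Wm i = Wv i - s := by simp [hWm]
      have hWmj : Wm j = Wv j + s := by simp [hWm, hji]
      have hWpo : ∀ l, l ≠ i → l ≠ j → Wp l = Wv l := fun l h1 h2 => by simp [hWp, h1, h2]
      have hWmo : ∀ l, l ≠ i → l ≠ j → Wm l = Wv l := fun l h1 h2 => by simp [hWm, h1, h2]
      have htle1 : t ≤ 1 - Wv i := min_le_left _ _
      have htle2 : t ≤ Wv j := min_le_right _ _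
      have hsle1 : s ≤ Wv i := min_le_left _ _
      have hsle2 : s ≤ 1 - Wv j := min_le_right _ _
      have hWp0 : ∀ l, 0 ≤ Wp l := by
        intro l
        by_cases h1 : l = i
        · rw [h1, hWpi]; linarith
        · by_cases h2 : l = j
          · rw [h2, hWpj]; linarith
          · rw [hWpo l h1 h2]; exact hW0 l
      have hWp1 : ∀ l, Wp l ≤ 1 := by
        intro l
        by_cases h1 : l = i
        · rw [h1, hWpi]; linarith
        · by_cases h2 : l = j
          · rw [h2, hWpj]; linarith [hW1 j]
          · rw [hWpo l h1 h2]; exact hW1 l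
      have hWm0 : ∀ l, 0 ≤ Wm l := by
        intro l
        by_cases h1 : l = i
        · rw [h1, hWmi]; linarith
        · by_cases h2 : l = j
          · rw [h2, hWmj]; linarith [hW0 j]
          · rw [hWmo l h1 h2]; exact hW0 l
      have hWm1 : ∀ l, Wm l ≤ 1 := by
        intro l
        by_cases h1 : l = i
        · rw [h1, hWmi]; linarith
        · by_cases h2 : l = j
          · rw [h2, hWmj]; linarith
          · rw [hWmo l h1 h2]; exact hW1 l
      have hsum_p : ∑ l, Wp l = ∑ l, Wv l := by
        have := sum_diff_pair hij Wp Wv hWpo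
        rw [hWpi, hWpj] at this
        linarith
      have hsum_m : ∑ l, Wm l = ∑ l, Wv l := by
        have := sum_diff_pair hij Wm Wv hWmo
        rw [hWmi, hWmj] at this
        linarith
      have hstne : s + t ≠ 0 := ne_of_gt (by linarith)
      have hab : Wv = (s/(s+t)) • Wp + (t/(s+t)) • Wm := by
        funext l
        simp only [Pi.add_apply, Pi.smul_apply, smul_eq_mul]
        by_cases h1 : l = i
        · rw [h1, hWpi, hWmi]; field_simp; ring
        · by_cases h2 : l = j
          · rw [h2, hWpj, hWmj]; field_simp; ring
          · rw [hWpo l h1 h2, hWmo l h1 h2]; field_simp; try ring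
      have hFsub_p : fracSet Wp ⊆ fracSet Wv := by
        intro l hl
        by_cases h1 : l = i
        · rwa [h1]
        · by_cases h2 : l = j
          · rwa [h2]
          · rw [mem_fracSet] at hl ⊢
            rwa [hWpo l h1 h2] at hl
      have hFsub_m : fracSet Wm ⊆ fracSet Wv := by
        intro l hl
        by_cases h1 : l = i
        · rwa [h1]
        · by_cases h2 : l = j
          · rwa [h2]
          · rw [mem_fracSet] at hl ⊢
            rwa [hWmo l h1 h2] at hl
      have hcard_p : (fracSet Wp).card < (fracSet Wv).card := by
        rcases min_cases (1 - Wv i) (Wv j) with ⟨heq, _⟩ | ⟨heq, _⟩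
        · have hnotin : i ∉ fracSet Wp := by
            intro hc
            exact (mem_fracSet.mp hc).2 (by rw [hWpi, ht, heq]; ring)
          exact Finset.card_lt_card ((Finset.ssubset_iff_of_subset hFsub_p).mpr ⟨i, hiF, hnotin⟩)
        · have hnotin : j ∉ fracSet Wp := by
            intro hc
            exact (mem_fracSet.mp hc).1 (by rw [hWpj, ht, heq]; ring)
          exact Finset.card_lt_card ((Finset.ssubset_iff_of_subset hFsub_p).mpr ⟨j, hjF, hnotin⟩)
      have hcard_m : (fracSet Wm).card < (fracSet Wv).card := by
        rcases min_cases (Wv i) (1 - Wv j) with ⟨heq, _⟩ | ⟨heq, _⟩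
        · have hnotin : i ∉ fracSet Wm := by
            intro hc
            exact (mem_fracSet.mp hc).1 (by rw [hWmi, hs, heq]; ring)
          exact Finset.card_lt_card ((Finset.ssubset_iff_of_subset hFsub_m).mpr ⟨i, hiF, hnotin⟩)
        · have hnotin : j ∉ fracSet Wm := by
            intro hc
            exact (mem_fracSet.mp hc).2 (by rw [hWmj, hs, heq]; ring)
          exact Finset.card_lt_card ((Finset.ssubset_iff_of_subset hFsub_m).mpr ⟨j, hjF, hnotin⟩)
      have hms_p : vmeas k Wp ≤ N := le_trans (vmeas_le k Wp) (by omega)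
      have hms_m : vmeas k Wm ≤ N := le_trans (vmeas_le k Wm) (by omega)
      obtain ⟨Tp, hTpc, hTp⟩ := ih Wp hWp0 hWp1 (by rw [hsum_p]; exact hsum) hms_p
      obtain ⟨Tm, hTmc, hTm⟩ := ih Wm hWm0 hWm1 (by rw [hsum_m]; exact hsum) hms_m
      have hcomb : n2 (A.mulVec (z * Wv)) ≤
          max (n2 (A.mulVec (z * Wp))) (n2 (A.mulVec (z * Wm))) := by
        conv_lhs => rw [hab]
        exact n2_convex_comb A z Wp Wm _ _ (by positivity) (by positivity)
          (by field_simp)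
      rcases le_total (n2 (A.mulVec (restr z Tp))) (n2 (A.mulVec (restr z Tm))) with hle | hle
      · exact ⟨Tm, hTmc, le_trans hcomb (max_le (le_trans hTp hle) hTm)⟩
      · exact ⟨Tp, hTpc, le_trans hcomb (max_le hTp (le_trans hTm hle))⟩
    -- ===== Case B : sum < k, move mass of a single fractional coordinate =====
    · have hlt : ∑ l, Wv l < (k : ℝ) := lt_of_le_of_ne hsum hsk
      have hmeas' : 2 * (fracSet Wv).card ≤ N := by
        have h1 : vmeas k Wv = 2 * (fracSet Wv).card + 1 := by
          unfold vmeas; rw [if_neg hsk]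
        omega
      set t := min (1 - Wv i) ((k:ℝ) - ∑ l, Wv l) with ht
      have htpos : 0 < t := lt_min (by linarith) (by linarith)
      have htle1 : t ≤ 1 - Wv i := min_le_left _ _
      have htle2 : t ≤ (k:ℝ) - ∑ l, Wv l := min_le_right _ _
      set s := Wv i with hsdef
      set Wp : Fin n → ℝ := Function.update Wv i (Wv i + t) with hWp
      set Wm : Fin n → ℝ := Function.update Wv i 0 with hWm
      have hWpi : Wp i = Wv i + t := by rw [hWp]; simp
      have hWmi : Wm i = 0 := by rw [hWm]; simp
      have hWpo : ∀ l, l ≠ i → Wp l = Wv l := fun l h1 => by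
        rw [hWp, Function.update_of_ne h1]
      have hWmo : ∀ l, l ≠ i → Wm l = Wv l := fun l h1 => by
        rw [hWm, Function.update_of_ne h1]
      have hWp0 : ∀ l, 0 ≤ Wp l := by
        intro l
        by_cases h1 : l = i
        · rw [h1, hWpi]; linarith
        · rw [hWpo l h1]; exact hW0 l
      have hWp1 : ∀ l, Wp l ≤ 1 := by
        intro l
        by_cases h1 : l = i
        · rw [h1, hWpi]; linarith
        · rw [hWpo l h1]; exact hW1 l
      have hWm0 : ∀ l, 0 ≤ Wm l := by
        intro l
        by_cases h1 : l = i
        · rw [h1, hWmi]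
        · rw [hWmo l h1]; exact hW0 l
      have hWm1 : ∀ l, Wm l ≤ 1 := by
        intro l
        by_cases h1 : l = i
        · rw [h1, hWmi]; linarith
        · rw [hWmo l h1]; exact hW1 l
      have hsum_univ : ∑ l, Wv l = Wv i + ∑ l ∈ Finset.univ.erase i, Wv l :=
        (Finset.add_sum_erase _ Wv (Finset.mem_univ i)).symm
      have hsum_p : ∑ l, Wp l = ∑ l, Wv l + t := by
        rw [hWp, Finset.sum_update_of_mem (Finset.mem_univ i), ← Finset.erase_eq]
        rw [hsum_univ]; ring
      have hsum_m : ∑ l, Wm l = ∑ l, Wv l - Wv i := by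
        rw [hWm, Finset.sum_update_of_mem (Finset.mem_univ i), ← Finset.erase_eq]
        rw [hsum_univ]; ring
      have hsum_p' : ∑ l, Wp l ≤ (k:ℝ) := by rw [hsum_p]; linarith
      have hsum_m' : ∑ l, Wm l ≤ (k:ℝ) := by rw [hsum_m]; linarith [hi0']
      have hstne : s + t ≠ 0 := ne_of_gt (by rw [hsdef]; linarith)
      have hab : Wv = (s/(s+t)) • Wp + (t/(s+t)) • Wm := by
        funext l
        simp only [Pi.add_apply, Pi.smul_apply, smul_eq_mul]
        by_cases h1 : l = i
        · rw [h1, hWpi, hWmi, hsdef]; field_simp [show Wv i + t ≠ 0 from hstne]; try ring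
        · rw [hWpo l h1, hWmo l h1]; field_simp; try ring
      have hFsub_p : fracSet Wp ⊆ fracSet Wv := by
        intro l hl
        by_cases h1 : l = i
        · rwa [h1]
        · rw [mem_fracSet] at hl ⊢
          rwa [hWpo l h1] at hl
      have hFsub_m : fracSet Wm ⊆ fracSet Wv := by
        intro l hl
        by_cases h1 : l = i
        · rwa [h1]
        · rw [mem_fracSet] at hl ⊢
          rwa [hWmo l h1] at hl
      have hcard_m : (fracSet Wm).card < (fracSet Wv).card := by
        have hnotin : i ∉ fracSet Wm := by
          intro hc
          exact (mem_fracSet.mp hc).1 hWmi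
        exact Finset.card_lt_card ((Finset.ssubset_iff_of_subset hFsub_m).mpr ⟨i, hiF, hnotin⟩)
      have hms_m : vmeas k Wm ≤ N := le_trans (vmeas_le k Wm) (by omega)
      have hms_p : vmeas k Wp ≤ N := by
        rcases min_cases (1 - Wv i) ((k:ℝ) - ∑ l, Wv l) with ⟨heq, _⟩ | ⟨heq, _⟩
        · have hnotin : i ∉ fracSet Wp := by
            intro hc
            exact (mem_fracSet.mp hc).2 (by rw [hWpi, ht, heq]; ring)
          have hcard_p : (fracSet Wp).card < (fracSet Wv).card :=
            Finset.card_lt_card ((Finset.ssubset_iff_of_subset hFsub_p).mpr ⟨i, hiF, hnotin⟩)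
          exact le_trans (vmeas_le k Wp) (by omega)
        · have hsum_pk : ∑ l, Wp l = (k:ℝ) := by
            rw [hsum_p, ht, heq]; ring
          have : vmeas k Wp = 2 * (fracSet Wp).card := by
            unfold vmeas; rw [if_pos hsum_pk]; omega
          have hcle := Finset.card_le_card hFsub_p
          omega
      obtain ⟨Tp, hTpc, hTp⟩ := ih Wp hWp0 hWp1 hsum_p' hms_p
      obtain ⟨Tm, hTmc, hTm⟩ := ih Wm hWm0 hWm1 hsum_m' hms_m
      have hcomb : n2 (A.mulVec (z * Wv)) ≤
          max (n2 (A.mulVec (z * Wp))) (n2 (A.mulVec (z * Wm))) := by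
        conv_lhs => rw [hab]
        exact n2_convex_comb A z Wp Wm _ _ (by positivity) (by positivity)
          (by field_simp)
      rcases le_total (n2 (A.mulVec (restr z Tp))) (n2 (A.mulVec (restr z Tm))) with hle | hle
      · exact ⟨Tm, hTmc, le_trans hcomb (max_le (le_trans hTp hle) hTm)⟩
      · exact ⟨Tp, hTpc, le_trans hcomb (max_le hTp (le_trans hTm hle))⟩

/-- main vertex bound -/
lemma vertex_bound {k : ℕ} (hk : 0 < k) (hkn : k ≤ n) (A : Matrix (Fin m) (Fin n) ℝ)
    (z Wv : Fin n → ℝ) (hW0 : ∀ i, 0 ≤ Wv i) (hW1 : ∀ i, Wv i ≤ 1)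
    (hsum : ∑ i, Wv i ≤ (k : ℝ)) :
    ∃ T : Finset (Fin n), T.card ≤ k ∧
      n2 (A.mulVec (z * Wv)) ≤ n2 (A.mulVec (restr z T)) :=
  vertex_aux hk hkn A z (vmeas k Wv) Wv hW0 hW1 hsum (le_refl _)

end VertexMain

section Aux2
variable {m n : ℕ}

lemma n2_sub_le (a b : Fin n → ℝ) : n2 (a - b) ≤ n2 a + n2 b := by
  rw [sub_eq_add_neg]
  exact le_trans (n2_add_le a (-b)) (by rw [n2_neg])

lemma n2_sub_le3 (a b c : Fin n → ℝ) : n2 (a - c) ≤ n2 (a - b) + n2 (b - c) := by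
  have : a - c = (a - b) + (b - c) := by abel
  rw [this]
  exact n2_add_le _ _

/-- thresholding exchange: the energy of `v` on `S \ S*` is at most that on `S* \ S`. -/
lemma threshold_exchange {k : ℕ} {v xs : Fin n → ℝ} (hxs : IsHT k v xs)
    {S : Finset (Fin n)} (hS : S.card ≤ k) :
    nsq (restr v (S \ supp xs)) ≤ nsq (restr v ((supp xs) \ S)) := by
  set S' := supp xs with hS'
  have hmin := hxs.2 (restr v S) (sparse_restr v hS)
  have hmin' : nsq (v - xs) ≤ nsq (v - restr v S) := by
    have h1 := n2_sq (v - xs)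
    have h2 := n2_sq (v - restr v S)
    nlinarith [n2_nonneg (v - xs), n2_nonneg (v - restr v S), hmin]
  have hrhs : v - restr v S = restr v Sᶜ := by
    funext i
    by_cases hi : i ∈ S <;> simp [restr, hi]
  have hlhs : restr (v - xs) S'ᶜ = restr v S'ᶜ := by
    funext i
    by_cases hi : i ∈ S'ᶜ
    · have : xs i = 0 := by
        by_contra hc
        exact (Finset.mem_compl.mp hi) (mem_supp.mpr hc)
      simp [restr, hi, this]
    · simp [restr, hi]
  have hlow : nsq (restr v S'ᶜ) ≤ nsq (v - xs) := by
    rw [← hlhs]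
    rw [nsq_split (v - xs) S'ᶜ]
    have := nsq_nonneg (restr (v - xs) S'ᶜᶜ)
    linarith
  have hmain : nsq (restr v S'ᶜ) ≤ nsq (restr v Sᶜ) := by
    rw [← hrhs]
    exact le_trans hlow hmin'
  -- split into common part and differences
  have hsplit1 : nsq (restr v S'ᶜ) = nsq (restr v (S \ S')) + nsq (restr v (Sᶜ ∩ S'ᶜ)) := by
    rw [nsq_restr, nsq_restr, nsq_restr, ← Finset.sum_union]
    · congr 1
      ext i
      simp only [Finset.mem_union, Finset.mem_sdiff, Finset.mem_inter, Finset.mem_compl]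
      tauto
    · rw [Finset.disjoint_left]
      intro i hi hco
      simp only [Finset.mem_sdiff] at hi
      simp only [Finset.mem_inter, Finset.mem_compl] at hco
      exact hco.1 hi.1
  have hsplit2 : nsq (restr v Sᶜ) = nsq (restr v (S' \ S)) + nsq (restr v (Sᶜ ∩ S'ᶜ)) := by
    rw [nsq_restr, nsq_restr, nsq_restr, ← Finset.sum_union]
    · congr 1
      ext i
      simp only [Finset.mem_union, Finset.mem_sdiff, Finset.mem_inter, Finset.mem_compl]
      tauto
    · rw [Finset.disjoint_left]
      intro i hi hco
      simp only [Finset.mem_sdiff] at hi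
      simp only [Finset.mem_inter, Finset.mem_compl] at hco
      exact hco.2 hi.1
  rw [hsplit1, hsplit2] at hmain
  linarith

/-- solve the pursuit-step quadratic inequality -/
lemma pursuit_solve {δ X P C b : ℝ} (hδ0 : 0 ≤ δ) (hδ1 : δ < 1)
    (hX0 : 0 ≤ X) (hP0 : 0 ≤ P) (hC0 : 0 ≤ C) (hb0 : 0 ≤ b)
    (hXPC : X ^ 2 = P ^ 2 + C ^ 2) (hP : P ≤ δ * X + b) :
    X ≤ C / Real.sqrt (1 - δ ^ 2) + b / (1 - δ) := by
  have h1δ : (0:ℝ) < 1 - δ := by linarith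
  have h1δ' : (0:ℝ) < 1 + δ := by linarith
  have h1δ2 : (0:ℝ) < 1 - δ ^ 2 := by nlinarith
  have hPsq : P ^ 2 ≤ (δ * X + b) ^ 2 := by
    have hr : 0 ≤ δ * X + b := by positivity
    nlinarith
  have hsq : X ^ 2 ≤ (δ * X + b) ^ 2 + C ^ 2 := by nlinarith
  by_cases hcase : X ≤ b / (1 - δ)
  · have : (0:ℝ) ≤ C / Real.sqrt (1 - δ ^ 2) := by positivity
    linarith
  · push_neg at hcase
    rw [div_lt_iff₀ h1δ] at hcase
    set G := X * (1 - δ) - b with hGdef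
    have hG : 0 < G := by rw [hGdef]; nlinarith
    have hXg : X * (1 - δ) = G + b := by rw [hGdef]; ring
    have hkey : G * (X * (1 + δ) + b) ≤ C ^ 2 := by nlinarith
    have h2 : G * (1 + δ) / (1 - δ) ≤ X * (1 + δ) + b := by
      rw [div_le_iff₀ h1δ]
      nlinarith
    have hG2 : G ^ 2 * (1 + δ) ≤ C ^ 2 * (1 - δ) := by
      have h3 : G * (G * (1 + δ) / (1 - δ)) ≤ C ^ 2 :=
        le_trans (mul_le_mul_of_nonneg_left h2 (le_of_lt hG)) hkey
      rw [mul_div_assoc'] at h3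
      rw [div_le_iff₀ h1δ] at h3
      nlinarith
    set s1 := Real.sqrt (1 - δ) with hs1
    set s2 := Real.sqrt (1 + δ) with hs2
    have hs1p : 0 < s1 := Real.sqrt_pos.mpr h1δ
    have hs2p : 0 < s2 := Real.sqrt_pos.mpr h1δ'
    have hs1sq : s1 ^ 2 = 1 - δ := Real.sq_sqrt (le_of_lt h1δ)
    have hs2sq : s2 ^ 2 = 1 + δ := Real.sq_sqrt (le_of_lt h1δ')
    have hsqrtmul : Real.sqrt (1 - δ ^ 2) = s1 * s2 := by
      rw [show (1:ℝ) - δ ^ 2 = (1 - δ) * (1 + δ) by ring,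
        Real.sqrt_mul (le_of_lt h1δ)]
    have hGle : G ≤ C * (s1 / s2) := by
      have hrpos : (0:ℝ) ≤ C * (s1 / s2) := by positivity
      have hG2' : G ^ 2 ≤ (C * (s1 / s2)) ^ 2 := by
        rw [mul_pow, div_pow, hs1sq, hs2sq]
        rw [show C ^ 2 * ((1 - δ) / (1 + δ)) = C ^ 2 * (1 - δ) / (1 + δ) by ring,
          le_div_iff₀ h1δ']
        nlinarith
      calc G = Real.sqrt (G ^ 2) := (Real.sqrt_sq (le_of_lt hG)).symm
        _ ≤ Real.sqrt ((C * (s1 / s2)) ^ 2) := Real.sqrt_le_sqrt hG2'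
        _ = C * (s1 / s2) := Real.sqrt_sq hrpos
    have hfin : X ≤ (C * (s1 / s2) + b) / (1 - δ) := by
      rw [le_div_iff₀ h1δ]
      linarith [hXg, hGle]
    refine le_trans hfin (le_of_eq ?_)
    rw [hsqrtmul, ← hs1sq]
    field_simp
end Aux2

section Arith

/-- strictness of the contraction factor -/
lemma rho_lt_one {δk δ2k δ3k : ℝ} (h0 : 0 ≤ δk) (h1 : δk ≤ δ2k) (h2 : δ2k ≤ δ3k)
    (h3 : δ3k ≤ 1 / 9) :
    (1 / Real.sqrt (1 - δ2k ^ 2)) *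
      ((δ2k + 6 * δ3k) * Real.sqrt ((1 + δk) / (1 - δ2k)) + δ3k) < 1 := by
  have h2k9 : δ2k ≤ 1 / 9 := le_trans h2 h3
  have h2k0 : 0 ≤ δ2k := le_trans h0 h1
  have hpos : (0:ℝ) < 1 - δ2k := by linarith
  have hpos2 : (0:ℝ) < 1 - δ2k ^ 2 := by nlinarith
  have hsle : Real.sqrt ((1 + δk) / (1 - δ2k)) ≤ 9 / 8 := by
    have harg : (1 + δk) / (1 - δ2k) ≤ (9 / 8) ^ 2 := by
      rw [div_le_iff₀ hpos]
      nlinarith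
    calc Real.sqrt ((1 + δk) / (1 - δ2k)) ≤ Real.sqrt ((9 / 8) ^ 2) :=
          Real.sqrt_le_sqrt harg
      _ = 9 / 8 := Real.sqrt_sq (by norm_num)
  have hs0 : 0 ≤ Real.sqrt ((1 + δk) / (1 - δ2k)) := Real.sqrt_nonneg _
  have hnum : (δ2k + 6 * δ3k) * Real.sqrt ((1 + δk) / (1 - δ2k)) + δ3k ≤ 71 / 72 := by
    have hc : δ2k + 6 * δ3k ≤ 7 / 9 := by linarith
    have hc0 : 0 ≤ δ2k + 6 * δ3k := by linarith
    nlinarith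
  have hden : (71:ℝ) / 72 < Real.sqrt (1 - δ2k ^ 2) := by
    rw [show (71:ℝ)/72 = Real.sqrt ((71/72)^2) from (Real.sqrt_sq (by norm_num)).symm]
    apply Real.sqrt_lt_sqrt (by positivity)
    nlinarith
  have hdenpos : (0:ℝ) < Real.sqrt (1 - δ2k ^ 2) := by positivity
  rw [one_div, inv_mul_eq_div, div_lt_one hdenpos]
  linarith

/-- the final coefficient-comparison inequality (bracket form). -/
lemma bracket_compare {δk δ2k δ3k E b νn : ℝ}
    (h0 : 0 ≤ δk) (h1 : δk ≤ δ2k) (h2 : δ2k ≤ δ3k) (h3 : δ3k ≤ 1 / 9)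
    (hp : 0 < δ2k) (hE : 0 ≤ E) (hb : 0 ≤ b) (hv : 0 ≤ νn) :
    (1 / Real.sqrt (1 - δ2k)) *
        (Real.sqrt (1 + δk) * (δ2k * E + b) + νn + νn
          + 2 * (Real.sqrt (1 + δk) * (δ3k * E + b))
          + Real.sqrt (1 + δk) * (δ3k * E + b))
      + (δ3k * E + b)
      + Real.sqrt ((1 + δ2k) / (1 - δ2k)) * b
    ≤ ((δ2k + 6 * δ3k) * Real.sqrt ((1 + δk) / (1 - δ2k)) + δ3k) * E
      + (1 + 5 * (δ2k + 6 * δ3k) / (δ2k + 4 * δ3k)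
          * Real.sqrt ((1 + δk) / (1 - δ2k))) * b
      + (2 * (δ2k + 6 * δ3k) / ((δ2k + 4 * δ3k) * Real.sqrt (1 - δ2k))
          + 1 / (1 - δ2k)) * νn := by
  have h2k9 : δ2k ≤ 1 / 9 := le_trans h2 h3
  have h2k0 : 0 ≤ δ2k := le_trans h0 h1
  have h3k0 : 0 ≤ δ3k := le_trans h2k0 h2
  have hpos : (0:ℝ) < 1 - δ2k := by linarith
  set α := Real.sqrt (1 + δk) with hα
  set β := Real.sqrt (1 - δ2k) with hβ
  have hβp : 0 < β := Real.sqrt_pos.mpr hpos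
  have hα1 : 1 ≤ α := by
    rw [hα]
    have h := Real.sqrt_le_sqrt (show (1:ℝ) ≤ 1 + δk by linarith)
    simpa using h
  have hκ : Real.sqrt ((1 + δk) / (1 - δ2k)) = α / β := by
    rw [hα, hβ, ← Real.sqrt_div (by linarith : (0:ℝ) ≤ 1 + δk)]
  have hα0 : 0 ≤ α := le_trans zero_le_one hα1
  have hαβ0 : 0 ≤ α / β := by positivity
  have hκ2 : Real.sqrt ((1 + δ2k) / (1 - δ2k)) ≤ 3 * (α / β) := by
    have e1 : 3 * (α / β) = Real.sqrt (9 * (1 + δk) / (1 - δ2k)) := by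
      rw [show (9:ℝ) * (1 + δk) / (1 - δ2k) = 9 * ((1 + δk) / (1 - δ2k)) by ring,
        Real.sqrt_mul (by norm_num : (0:ℝ) ≤ 9), ← hκ,
        show Real.sqrt 9 = 3 by
          rw [show (9:ℝ) = 3 ^ 2 by norm_num, Real.sqrt_sq (by norm_num)]]
    rw [e1]
    apply Real.sqrt_le_sqrt
    refine (div_le_div_iff_of_pos_right hpos).mpr ?_
    linarith
  have hD : (0:ℝ) < δ2k + 4 * δ3k := by linarith
  have hR : (7:ℝ) ≤ 5 * (δ2k + 6 * δ3k) / (δ2k + 4 * δ3k) := by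
    rw [le_div_iff₀ hD]
    linarith
  have hβinv : (0:ℝ) ≤ 1 / β := by positivity
  -- coefficient inequalities
  have cE : (1 / β) * (α * δ2k + 3 * (α * δ3k)) + δ3k
      ≤ (δ2k + 6 * δ3k) * (α / β) + δ3k := by
    have e : (δ2k + 6 * δ3k) * (α / β)
        = (1 / β) * (α * δ2k + 3 * (α * δ3k)) + 3 * (1 / β * (α * δ3k)) := by
      field_simp
      ring
    have hx : (0:ℝ) ≤ 1 / β * (α * δ3k) := by positivity
    rw [e]
    linarith
  have cb : (1 / β) * (4 * α) + 1 + Real.sqrt ((1 + δ2k) / (1 - δ2k))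
      ≤ 1 + 5 * (δ2k + 6 * δ3k) / (δ2k + 4 * δ3k) * (α / β) := by
    have h5 : (0:ℝ) ≤ (5 * (δ2k + 6 * δ3k) / (δ2k + 4 * δ3k) - 7) * (α / β) :=
      mul_nonneg (by linarith) hαβ0
    have hexp : (1 / β) * (4 * α) = 4 * (α / β) := by ring
    rw [hexp, show 5 * (δ2k + 6 * δ3k) / (δ2k + 4 * δ3k) * (α / β)
      = 7 * (α / β) + (5 * (δ2k + 6 * δ3k) / (δ2k + 4 * δ3k) - 7) * (α / β) by ring]
    linarith [hκ2, h5]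
  have cv : (1 / β) * 2
      ≤ 2 * (δ2k + 6 * δ3k) / ((δ2k + 4 * δ3k) * β) + 1 / (1 - δ2k) := by
    have hsplit : 2 * (δ2k + 6 * δ3k) / ((δ2k + 4 * δ3k) * β)
        = (2 * (δ2k + 6 * δ3k) / (δ2k + 4 * δ3k)) * (1 / β) := by
      field_simp
    have h2R : (2:ℝ) ≤ 2 * (δ2k + 6 * δ3k) / (δ2k + 4 * δ3k) := by
      rw [le_div_iff₀ hD]
      linarith
    have hinv2 : (0:ℝ) ≤ 1 / (1 - δ2k) := by positivity
    have h6 : (0:ℝ) ≤ (2 * (δ2k + 6 * δ3k) / (δ2k + 4 * δ3k) - 2) * (1 / β) :=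
      mul_nonneg (by linarith) hβinv
    rw [hsplit, show (2 * (δ2k + 6 * δ3k) / (δ2k + 4 * δ3k)) * (1 / β)
      = 2 * (1 / β) + (2 * (δ2k + 6 * δ3k) / (δ2k + 4 * δ3k) - 2) * (1 / β) by ring]
    linarith [hinv2, h6]
  -- combine
  rw [hκ]
  have hLHS : (1 / β) *
        (α * (δ2k * E + b) + νn + νn + 2 * (α * (δ3k * E + b)) + α * (δ3k * E + b))
      + (δ3k * E + b) + Real.sqrt ((1 + δ2k) / (1 - δ2k)) * b
    = ((1 / β) * (α * δ2k + 3 * (α * δ3k)) + δ3k) * E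
      + ((1 / β) * (4 * α) + 1 + Real.sqrt ((1 + δ2k) / (1 - δ2k))) * b
      + ((1 / β) * 2) * νn := by ring
  rw [hLHS]
  exact add_le_add (add_le_add (mul_le_mul_of_nonneg_right cE hE)
    (mul_le_mul_of_nonneg_right cb hb)) (mul_le_mul_of_nonneg_right cv hv)

end Arith

set_option maxHeartbeats 2000000 in
theorem stmt13
    {m n : ℕ} (A : Matrix (Fin m) (Fin n) ℝ)
    (x : Fin n → ℝ) (ν y : Fin m → ℝ) (hy : y = A.mulVec x + ν)
    (k : ℕ) (hk : 0 < k)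
    (S : Finset (Fin n)) (hS : IsTopK x k S)
    (ν' : Fin m → ℝ) (hν' : ν' = A.mulVec (restr x Sᶜ) + ν)
    (δk δ2k δ3k : ℝ) (hδk : IsRIC A k δk) (hδ2k : IsRIC A (2 * k) δ2k)
    (hδ3k : IsRIC A (3 * k) δ3k)
    (hδ2kpos : 0 < δ2k) (hδ3kb : δ3k ≤ 1 / 9)
    (xp : Fin n → ℝ) (hxp : Sparse k xp)
    (up : Fin n → ℝ) (hup : up = xp + A.transpose.mulVec (y - A.mulVec xp))
    (w : ℕ → Fin n → ℝ) (hw : SCM A y k 3 up w)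
    (xs : Fin n → ℝ) (hxs : IsHT k (up * ∏ l ∈ Finset.range 3, w l) xs)
    (xq : Fin n → ℝ) (hsupp : supp xq ⊆ supp xs)
    (hls : restr (A.transpose.mulVec (y - A.mulVec xq)) (supp xs) = 0) :
    n2 (xq - restr x S)
        ≤ (1 / Real.sqrt (1 - δ2k ^ 2))
              * ((δ2k + 6 * δ3k) * Real.sqrt ((1 + δk) / (1 - δ2k)) + δ3k)
              * n2 (xp - restr x S)
          + (1 / Real.sqrt (1 - δ2k ^ 2))
              * (1 + 5 * (δ2k + 6 * δ3k) / (δ2k + 4 * δ3k)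
                  * Real.sqrt ((1 + δk) / (1 - δ2k))) * n2 (A.transpose.mulVec ν')
          + (1 / Real.sqrt (1 - δ2k ^ 2))
              * (2 * (δ2k + 6 * δ3k) / ((δ2k + 4 * δ3k) * Real.sqrt (1 - δ2k))
                  + 1 / (1 - δ2k)) * n2 ν'
      ∧ (1 / Real.sqrt (1 - δ2k ^ 2))
            * ((δ2k + 6 * δ3k) * Real.sqrt ((1 + δk) / (1 - δ2k)) + δ3k) < 1 := by
  -- primitive facts
  have hA1 : SatRIP A k δk := hδk.1.2
  have hA2 : SatRIP A (2 * k) δ2k := hδ2k.1.2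
  have hA3 : SatRIP A (3 * k) δ3k := hδ3k.1.2
  have hδk0 : 0 ≤ δk := hδk.1.1
  have hδ2k0 : 0 ≤ δ2k := hδ2k.1.1
  have hδ3k0 : 0 ≤ δ3k := hδ3k.1.1
  have h12 : δk ≤ δ2k := ric_le hδk hδ2k (by omega)
  have h23 : δ2k ≤ δ3k := ric_le hδ2k hδ3k (by omega)
  have hδ2k9 : δ2k ≤ 1 / 9 := le_trans h23 hδ3kb
  have hpos1 : (0:ℝ) < 1 - δ2k := by linarith
  have hδ2k1 : δ2k < 1 := by linarith
  have hSk : S.card = k := hS.1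
  have hkn : k ≤ n := by
    have h := Finset.card_le_univ S
    rw [hSk] at h
    simpa using h
  refine ⟨?_, rho_lt_one hδk0 h12 h23 hδ3kb⟩
  set xS := restr x S with hxS
  set b := n2 (A.transpose.mulVec ν') with hbdef
  set νn := n2 ν' with hνndef
  set e := xS - xp with hedef
  set SP := supp xs with hSPdef
  have hSPk : SP.card ≤ k := hxs.1
  have hxp' : (supp xp).card ≤ k := hxp
  set α := Real.sqrt (1 + δk) with hαdef
  set β := Real.sqrt (1 - δ2k) with hβdef
  have hβp : 0 < β := Real.sqrt_pos.mpr hpos1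
  have hb0 : 0 ≤ b := n2_nonneg _
  have hνn0 : 0 ≤ νn := n2_nonneg _
  have hα0 : 0 ≤ α := Real.sqrt_nonneg _
  set E := n2 e with hEdef
  have hE0 : 0 ≤ E := n2_nonneg _
  -- y decomposition
  have hyS : y = A.mulVec xS + ν' := by
    rw [hy, hν', hxS]
    conv_lhs => rw [← restr_add_restr_compl x S]
    rw [Matrix.mulVec_add]
    abel
  -- u identity
  have hups : xS - up = (e - A.transpose.mulVec (A.mulVec e)) - A.transpose.mulVec ν' := by
    have h1 : y - A.mulVec xp = A.mulVec e + ν' := by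
      rw [hyS, hedef, Matrix.mulVec_sub]
      abel
    rw [hup, h1, Matrix.mulVec_add, hedef]
    abel
  -- support cardinalities
  have hsuppe : supp e ⊆ S ∪ supp xp := by
    rw [hedef]
    refine subset_trans (supp_sub_subset xS xp) ?_
    exact Finset.union_subset_union (by rw [hxS]; exact supp_restr x S) (subset_refl _)
  have hcardS : (S ∪ supp e).card ≤ 2 * k := by
    have h1 : S ∪ supp e ⊆ S ∪ supp xp :=
      Finset.union_subset Finset.subset_union_left hsuppe
    refine le_trans (Finset.card_le_card h1) (le_trans (Finset.card_union_le _ _) ?_)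
    rw [hSk]
    omega
  have hcardT : ∀ T : Finset (Fin n), T.card ≤ k → (T ∪ supp e).card ≤ 3 * k := by
    intro T hT
    have h1 : T ∪ supp e ⊆ T ∪ (S ∪ supp xp) :=
      Finset.union_subset Finset.subset_union_left
        (subset_trans hsuppe Finset.subset_union_right)
    refine le_trans (Finset.card_le_card h1) (le_trans (Finset.card_union_le _ _) ?_)
    have h2 := Finset.card_union_le S (supp xp)
    rw [hSk] at h2
    omega
  -- "d" bounds
  have dT : ∀ T : Finset (Fin n), T.card ≤ k →
      n2 (restr (xS - up) T) ≤ δ3k * E + b := by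
    intro T hT
    rw [hups, restr_sub]
    refine le_trans (n2_sub_le _ _) (add_le_add ?_ ?_)
    · exact rip_restr hA3 hδ3k0 (hcardT T hT)
    · exact n2_restr_le _ _
  have dS : n2 (restr (xS - up) S) ≤ δ2k * E + b := by
    rw [hups, restr_sub]
    refine le_trans (n2_sub_le _ _) (add_le_add ?_ ?_)
    · exact rip_restr hA2 hδ2k0 hcardS
    · exact n2_restr_le _ _
  -- compression weights
  obtain ⟨hw0P, hw0min⟩ := hw 0 (by norm_num)
  obtain ⟨hw1P, hw1min⟩ := hw 1 (by norm_num)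
  obtain ⟨hw2P, hw2min⟩ := hw 2 (by norm_num)
  set W1 := w 0 with hW1def
  set W2 := w 0 * w 1 with hW2def
  set W3 := w 0 * w 1 * w 2 with hW3def
  have hW1b : ∀ i, 0 ≤ W1 i ∧ W1 i ≤ 1 := hw0P.2
  have hW2b : ∀ i, 0 ≤ W2 i ∧ W2 i ≤ 1 := by
    intro i
    have h0 := hw0P.2 i
    have h1 := hw1P.2 i
    constructor
    · exact mul_nonneg h0.1 h1.1
    · exact mul_le_one₀ h0.2 h1.1 h1.2
  have hW3b : ∀ i, 0 ≤ W3 i ∧ W3 i ≤ 1 := by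
    intro i
    have h0 := hW2b i
    have h1 := hw2P.2 i
    constructor
    · exact mul_nonneg h0.1 h1.1
    · exact mul_le_one₀ h0.2 h1.1 h1.2
  have hW1s : ∑ i, W1 i ≤ (k : ℝ) := le_of_eq hw0P.1
  have hW2s : ∑ i, W2 i ≤ (k : ℝ) := by
    refine le_trans (Finset.sum_le_sum (fun i _ => ?_)) hW1s
    have h0 := hw0P.2 i
    have h1 := hw1P.2 i
    calc W2 i = W1 i * w 1 i := rfl
      _ ≤ W1 i * 1 := mul_le_mul_of_nonneg_left h1.2 h0.1
      _ = W1 i := mul_one _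
  have hW3s : ∑ i, W3 i ≤ (k : ℝ) := by
    refine le_trans (Finset.sum_le_sum (fun i _ => ?_)) hW2s
    have h0 := hW2b i
    have h1 := hw2P.2 i
    calc W3 i = W2 i * w 2 i := rfl
      _ ≤ W2 i * 1 := mul_le_mul_of_nonneg_left h1.2 h0.1
      _ = W2 i := mul_one _
  -- indicator of S
  set wS : Fin n → ℝ := fun i => if i ∈ S then 1 else 0 with hwSdef
  have hwSP : InP k wS := by
    constructor
    · have h1 : (Finset.univ.filter (fun i => i ∈ S)) = S := by
        ext i; simp
      rw [hwSdef]
      rw [Finset.sum_boole, h1, hSk]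
    · intro i
      rw [hwSdef]
      by_cases hi : i ∈ S <;> simp [hi]
  have hgwS : ∀ g : Fin n → ℝ, g * wS = restr g S := by
    intro g
    funext i
    by_cases hi : i ∈ S <;> simp [restr, hwSdef, hi]
  -- complement splitting identities
  have hcompl : ∀ g : Fin n → ℝ, g - restr g Sᶜ = restr g S := by
    intro g
    funext i
    by_cases hi : i ∈ S <;> simp [restr, hi]
  have hsplitA : ∀ g : Fin n → ℝ,
      y - A.mulVec (restr g S) = (y - A.mulVec g) + A.mulVec (restr g Sᶜ) := by
    intro g
    rw [← hcompl g, Matrix.mulVec_sub]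
    abel
  -- off-support identification
  have hoffid : ∀ U : Finset (Fin n), (∀ i ∈ U, i ∉ S) →
      restr up U = - restr (xS - up) U := by
    intro U hU
    funext i
    by_cases hi : i ∈ U
    · have hiS : i ∉ S := hU i hi
      have hxSi : xS i = 0 := by rw [hxS]; simp [restr, hiS]
      simp [restr, hi, hxSi]
    · simp [restr, hi]
  -- key off-support bound under A
  have hAoff : ∀ Wv : Fin n → ℝ, (∀ i, 0 ≤ Wv i) → (∀ i, Wv i ≤ 1) →
      (∑ i, Wv i ≤ (k : ℝ)) →
      n2 (A.mulVec (restr (up * Wv) Sᶜ)) ≤ α * (δ3k * E + b) := by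
    intro Wv hWv0 hWv1 hWvs
    have hUS : ∀ i ∈ Sᶜ, i ∉ S := fun i hi => Finset.mem_compl.mp hi
    have h1 : restr (up * Wv) Sᶜ = - (restr (xS - up) Sᶜ * Wv) := by
      rw [restr_mul_right, hoffid Sᶜ hUS]
      funext i
      simp only [Pi.mul_apply, Pi.neg_apply]
      ring
    rw [h1, Matrix.mulVec_neg, n2_neg]
    obtain ⟨T, hTc, hTb⟩ := vertex_bound hk hkn A (restr (xS - up) Sᶜ) Wv hWv0 hWv1 hWvs
    refine le_trans hTb ?_
    rw [restr_restr]
    have hcap : (Sᶜ ∩ T).card ≤ k :=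
      le_trans (Finset.card_le_card Finset.inter_subset_right) hTc
    refine le_trans (rip_upper hδk0 hA1 (sparse_restr _ hcap)) ?_
    exact mul_le_mul_of_nonneg_left (dT _ hcap) hα0
  -- SCM chain
  have hstep0 : n2 (y - A.mulVec (up * W1)) ≤ n2 (y - A.mulVec (restr up S)) := by
    have h := hw0min wS hwSP
    rw [Finset.prod_range_zero, mul_one, hgwS up] at h
    exact h
  have hval0 : n2 (y - A.mulVec (restr up S)) ≤ α * (δ2k * E + b) + νn := by
    have h1 : y - A.mulVec (restr up S) = A.mulVec (restr (xS - up) S) + ν' := by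
      rw [hyS]
      have h2 : restr (xS - up) S = xS - restr up S := by
        rw [restr_sub]
        congr 1
        exact restr_eq_self_of_supp (by rw [hxS]; exact supp_restr x S)
      rw [h2, Matrix.mulVec_sub]
      abel
    rw [h1]
    refine le_trans (n2_add_le _ _) (add_le_add ?_ (le_refl _))
    refine le_trans (rip_upper hδk0 hA1 (sparse_restr _ (le_of_eq hSk))) ?_
    rw [← hαdef]
    exact mul_le_mul_of_nonneg_left dS hα0
  have hstep1 : n2 (y - A.mulVec (up * W2)) ≤ n2 (y - A.mulVec (restr (up * W1) S)) := by
    have h := hw1min wS hwSP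
    rw [Finset.prod_range_one] at h
    rw [show up * W1 * wS = restr (up * W1) S from hgwS _] at h
    rw [hW2def, hW1def]
    rw [hW1def] at h
    rw [← mul_assoc]
    exact h
  have hoff1 : n2 (y - A.mulVec (restr (up * W1) S))
      ≤ n2 (y - A.mulVec (up * W1)) + α * (δ3k * E + b) := by
    rw [hsplitA (up * W1)]
    refine le_trans (n2_add_le _ _) (add_le_add (le_refl _) ?_)
    exact hAoff W1 (fun i => (hW1b i).1) (fun i => (hW1b i).2) hW1s
  have hstep2 : n2 (y - A.mulVec (up * W3)) ≤ n2 (y - A.mulVec (restr (up * W2) S)) := by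
    have h := hw2min wS hwSP
    rw [Finset.prod_range_succ, Finset.prod_range_one] at h
    rw [show up * (w 0 * w 1) * wS = restr (up * (w 0 * w 1)) S from hgwS _] at h
    rw [hW3def, hW2def]
    rw [← mul_assoc]
    exact h
  have hoff2 : n2 (y - A.mulVec (restr (up * W2) S))
      ≤ n2 (y - A.mulVec (up * W2)) + α * (δ3k * E + b) := by
    rw [hsplitA (up * W2)]
    refine le_trans (n2_add_le _ _) (add_le_add (le_refl _) ?_)
    exact hAoff W2 (fun i => (hW2b i).1) (fun i => (hW2b i).2) hW2s
  have hσ3 : n2 (y - A.mulVec (up * W3))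
      ≤ α * (δ2k * E + b) + νn + 2 * (α * (δ3k * E + b)) := by
    linarith [hstep0, hval0, hstep1, hoff1, hstep2, hoff2]
  have hr3 : n2 (A.mulVec (xS - up * W3)) ≤ n2 (y - A.mulVec (up * W3)) + νn := by
    have h1 : A.mulVec (xS - up * W3) = (y - A.mulVec (up * W3)) - ν' := by
      rw [hyS, Matrix.mulVec_sub]
      abel
    rw [h1]
    exact n2_sub_le _ _
  -- compressed residual bound on S
  have ht3 : n2 (restr (xS - up * W3) S)
      ≤ (1 / β) * ((n2 (y - A.mulVec (up * W3)) + νn) + α * (δ3k * E + b)) := by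
    have hsp : Sparse (2 * k) (restr (xS - up * W3) S) :=
      sparse_mono (by omega) (sparse_restr _ (le_of_eq hSk))
    refine le_trans (rip_lower hδ2k1 hA2 hsp) ?_
    rw [← hβdef, div_eq_mul_inv, mul_comm, ← one_div]
    refine mul_le_mul_of_nonneg_left ?_ (by positivity)
    have hgid : A.mulVec (restr (xS - up * W3) S)
        = A.mulVec (xS - up * W3) - A.mulVec (restr (xS - up * W3) Sᶜ) := by
      rw [← Matrix.mulVec_sub, hcompl]
    rw [hgid]
    refine le_trans (n2_sub_le _ _) (add_le_add (by linarith [hr3]) ?_)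
    have hco : restr (xS - up * W3) Sᶜ = - restr (up * W3) Sᶜ := by
      funext i
      by_cases hi : i ∈ S
      · simp [restr, hi]
      · have hxSi : xS i = 0 := by rw [hxS]; simp [restr, hi]
        simp [restr, hi, hxSi]
    rw [hco, Matrix.mulVec_neg, n2_neg]
    exact hAoff W3 (fun i => (hW3b i).1) (fun i => (hW3b i).2) hW3s
  -- extraction of the compression error
  have hCx : n2 (restr (xq - xS) SPᶜ)
      ≤ n2 (restr (xS - up * W3) S) + (δ3k * E + b) := by
    have ha : restr (xq - xS) SPᶜ = - restr xS SPᶜ := by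
      funext i
      by_cases hi : i ∈ SP
      · simp [restr, hi]
      · have hxqi : xq i = 0 := by
          by_contra hc
          exact hi (hsupp (mem_supp.mpr hc))
        simp [restr, hi, hxqi]
    have hbb : restr xS SPᶜ = restr xS (S \ SP) := by
      funext i
      by_cases hi1 : i ∈ SP
      · have : i ∉ S \ SP := fun hc => (Finset.mem_sdiff.mp hc).2 hi1
        simp [restr, hi1, this]
      · by_cases hi2 : i ∈ S
        · have : i ∈ S \ SP := Finset.mem_sdiff.mpr ⟨hi2, hi1⟩
          simp [restr, hi1, this]
        · have h3 : i ∉ S \ SP := fun hc => hi2 (Finset.mem_sdiff.mp hc).1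
          have hxSi : xS i = 0 := by rw [hxS]; simp [restr, hi2]
          simp [restr, hi1, h3, hxSi]
    have hc : restr xS (S \ SP)
        = restr (xS - up * W3) (S \ SP) + restr (up * W3) (S \ SP) := by
      rw [restr_sub]
      abel
    have hstep : n2 (restr (xq - xS) SPᶜ)
        ≤ n2 (restr (xS - up * W3) (S \ SP)) + n2 (restr (up * W3) (S \ SP)) := by
      rw [ha, n2_neg, hbb, hc]
      exact n2_add_le _ _
    have hmono : n2 (restr (xS - up * W3) (S \ SP)) ≤ n2 (restr (xS - up * W3) S) :=
      n2_restr_mono (Finset.sdiff_subset) _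
    -- thresholding exchange
    have hv3 : up * ∏ l ∈ Finset.range 3, w l = up * W3 := by
      rw [show (Finset.range 3) = Finset.range (2+1) from rfl, Finset.prod_range_succ,
        Finset.prod_range_succ, Finset.prod_range_one, hW3def]
    have hex := threshold_exchange hxs (le_of_eq hSk)
    rw [hv3, ← hSPdef] at hex
    have hex2 : n2 (restr (up * W3) (S \ SP)) ≤ n2 (restr (up * W3) (SP \ S)) :=
      n2_mono hex
    -- bound the exchanged term
    have hUS : ∀ i ∈ SP \ S, i ∉ S := fun i hi => (Finset.mem_sdiff.mp hi).2
    have h1 : restr (up * W3) (SP \ S) = - (restr (xS - up) (SP \ S) * W3) := by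
      rw [restr_mul_right, hoffid _ hUS]
      funext i
      simp only [Pi.mul_apply, Pi.neg_apply]
      ring
    have hfin : n2 (restr (up * W3) (SP \ S)) ≤ δ3k * E + b := by
      rw [h1, n2_neg]
      obtain ⟨T, hTc, hTb⟩ := topk_nsq_bound hk hkn (restr (xS - up) (SP \ S)) W3
        (fun i => (hW3b i).1) (fun i => (hW3b i).2) hW3s
      refine le_trans hTb ?_
      rw [restr_restr]
      exact dT _ (le_trans (Finset.card_le_card Finset.inter_subset_right) (le_of_eq hTc))
    linarith [hstep, hmono, hex2, hfin]
  -- pursuit (least-squares) step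
  have hsupph : supp (xq - xS) ⊆ SP ∪ S := by
    refine subset_trans (supp_sub_subset xq xS) (Finset.union_subset_union hsupp ?_)
    rw [hxS]
    exact supp_restr x S
  have hcardPS : (SP ∪ S).card ≤ 2 * k := by
    refine le_trans (Finset.card_union_le _ _) ?_
    rw [hSk]
    omega
  have horth : A.transpose.mulVec (y - A.mulVec xq) ⬝ᵥ restr (xq - xS) SP = 0 := by
    rw [dot_restr, hls, zero_dotProduct]
  have hydec : y - A.mulVec xq = ν' - A.mulVec (xq - xS) := by
    rw [hyS, Matrix.mulVec_sub]
    abel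
  have hdot1 : A.transpose.mulVec (A.mulVec (xq - xS)) ⬝ᵥ restr (xq - xS) SP
      = A.transpose.mulVec ν' ⬝ᵥ restr (xq - xS) SP := by
    have h1 := horth
    rw [hydec, Matrix.mulVec_sub, sub_dotProduct] at h1
    linarith
  have hdot2 : (A.mulVec (xq - xS)) ⬝ᵥ (A.mulVec (restr (xq - xS) SP))
      = A.transpose.mulVec (A.mulVec (xq - xS)) ⬝ᵥ restr (xq - xS) SP := by
    rw [dotProduct_comm, dot_mulVec_transpose A (restr (xq - xS) SP)
      (A.mulVec (xq - xS)), dotProduct_comm]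
  have hbil : |(A.mulVec (xq - xS)) ⬝ᵥ (A.mulVec (restr (xq - xS) SP))
      - (xq - xS) ⬝ᵥ restr (xq - xS) SP|
      ≤ δ2k * n2 (xq - xS) * n2 (restr (xq - xS) SP) := by
    apply rip_bilinear hA2 hδ2k0
    refine le_trans (Finset.card_le_card ?_) hcardPS
    exact Finset.union_subset hsupph
      (subset_trans (supp_restr _ _) Finset.subset_union_left)
  have habs : |A.transpose.mulVec ν' ⬝ᵥ restr (xq - xS) SP|
      ≤ b * n2 (restr (xq - xS) SP) := abs_dot_le _ _
  have hPsq : (n2 (restr (xq - xS) SP)) ^ 2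
      ≤ δ2k * n2 (xq - xS) * n2 (restr (xq - xS) SP) + b * n2 (restr (xq - xS) SP) := by
    rw [n2_sq, ← nsq_restr_eq_dot (xq - xS) SP]
    have h1 := abs_le.mp hbil
    have h2 := abs_le.mp habs
    linarith [hdot1, hdot2, h1.1, h1.2, h2.1, h2.2]
  have hPle : n2 (restr (xq - xS) SP) ≤ δ2k * n2 (xq - xS) + b := by
    rcases eq_or_lt_of_le (n2_nonneg (restr (xq - xS) SP)) with h0 | h0
    · rw [← h0]
      have : 0 ≤ δ2k * n2 (xq - xS) := mul_nonneg hδ2k0 (n2_nonneg _)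
      linarith
    · nlinarith [hPsq]
  have hXsq : (n2 (xq - xS)) ^ 2
      = (n2 (restr (xq - xS) SP)) ^ 2 + (n2 (restr (xq - xS) SPᶜ)) ^ 2 := by
    rw [n2_sq, n2_sq, n2_sq]
    exact nsq_split _ SP
  have hX := pursuit_solve hδ2k0 hδ2k1 (n2_nonneg (xq - xS))
    (n2_nonneg (restr (xq - xS) SP)) (n2_nonneg (restr (xq - xS) SPᶜ)) hb0 hXsq hPle
  -- final assembly
  set P2 := Real.sqrt (1 - δ2k ^ 2) with hP2def
  have hγp : (0:ℝ) < Real.sqrt (1 + δ2k) := Real.sqrt_pos.mpr (by linarith)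
  have hP2mul : P2 = β * Real.sqrt (1 + δ2k) := by
    rw [hP2def, show (1:ℝ) - δ2k ^ 2 = (1 - δ2k) * (1 + δ2k) by ring,
      Real.sqrt_mul hpos1.le, hβdef]
  have hP2p : 0 < P2 := by rw [hP2mul]; positivity
  have hβsq : β ^ 2 = 1 - δ2k := by rw [hβdef]; exact Real.sq_sqrt hpos1.le
  have hbid : b / (1 - δ2k) = (1 / P2) * (Real.sqrt ((1 + δ2k) / (1 - δ2k)) * b) := by
    rw [Real.sqrt_div (by linarith : (0:ℝ) ≤ 1 + δ2k), ← hβdef, hP2mul, ← hβsq]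
    field_simp
  have h1β0 : (0:ℝ) ≤ 1 / β := by positivity
  have hA3' : (n2 (y - A.mulVec (up * W3)) + νn) + α * (δ3k * E + b)
      ≤ α * (δ2k * E + b) + νn + νn + 2 * (α * (δ3k * E + b)) + α * (δ3k * E + b) := by
    linarith [hσ3]
  have ht3' : n2 (restr (xS - up * W3) S)
      ≤ (1 / β) * (α * (δ2k * E + b) + νn + νn + 2 * (α * (δ3k * E + b))
          + α * (δ3k * E + b)) :=
    le_trans ht3 (mul_le_mul_of_nonneg_left hA3' h1β0)
  have hfinal1 : n2 (restr (xq - xS) SPᶜ)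
      ≤ (1 / β) * (α * (δ2k * E + b) + νn + νn + 2 * (α * (δ3k * E + b))
          + α * (δ3k * E + b)) + (δ3k * E + b) := by
    linarith [hCx, ht3']
  have hbig := bracket_compare hδk0 h12 h23 hδ3kb hδ2kpos hE0 hb0 hνn0
  rw [← hαdef, ← hβdef] at hbig
  have hE' : n2 (xp - xS) = E := by
    rw [hEdef, hedef]
    exact n2_sub_comm xp xS
  rw [hE']
  have hchain : n2 (xq - xS)
      ≤ (1 / P2) * (((1 / β) * (α * (δ2k * E + b) + νn + νn
          + 2 * (α * (δ3k * E + b)) + α * (δ3k * E + b)) + (δ3k * E + b))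
          + Real.sqrt ((1 + δ2k) / (1 - δ2k)) * b) := by
    have h1 : n2 (xq - xS) ≤ (1 / P2) * n2 (restr (xq - xS) SPᶜ)
        + (1 / P2) * (Real.sqrt ((1 + δ2k) / (1 - δ2k)) * b) := by
      rw [← hbid]
      have h2 : n2 (restr (xq - xS) SPᶜ) / P2 = (1 / P2) * n2 (restr (xq - xS) SPᶜ) := by
        ring
      rw [← h2]
      exact hX
    refine le_trans h1 ?_
    rw [mul_add]
    refine add_le_add ?_ (le_refl _)
    exact mul_le_mul_of_nonneg_left hfinal1 (by positivity)
  refine le_trans hchain ?_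
  have hmul := mul_le_mul_of_nonneg_left hbig (by positivity : (0:ℝ) ≤ 1 / P2)
  refine le_trans hmul (le_of_eq ?_)
  ring
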